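/- The structure category Δ_ℕ generated by the functions !ₙ : [n] → [1] for all n ∈ ℕ (under composition, coproducts, and similarity components) contains the transposition [2] → [2] sending 1 ↦ 2 and 2 ↦ 1, and hence Δ_ℕ equals the category of all functions between finite ordinals. In particular, the transposition factors as the composite of a similarity component of !₂ : [2] → [1] with the coproduct !₀ + id_{[2]} + !₀ : [2] → [4]. -/
import Mathlib



/-- The element of `Fin (∑ i, k i)` determined by block `p.1` and offset `p.2`. -/
def sigmaToFin {n : ℕ} {k : Fin n → ℕ} (p : (i : Fin n) × Fin (k i)) : Fin (∑ i, k i) :=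
  ⟨(∑ j ∈ Finset.univ.filter fun j => j < p.1, k j) + p.2.val, by
    have hsub := Finset.sum_le_sum_of_subset (f := k)
      (Finset.subset_univ (insert p.1 (Finset.univ.filter fun j => j < p.1)))
    rw [Finset.sum_insert (by simp)] at hsub
    have := p.2.isLt
    omega⟩

/-- Decomposition of an element of `Fin (∑ i, k i)` into a block index and an offset. -/
def finToSigma {n : ℕ} {k : Fin n → ℕ} (p : Fin (∑ i, k i)) : (i : Fin n) × Fin (k i) :=
  (List.ofFn fun i => List.ofFn fun x : Fin (k i) =>
    (⟨i, x⟩ : (i : Fin n) × Fin (k i))).flatten.get (Fin.cast (by simp [Function.comp_def, List.sum_ofFn]) p)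

/-- Coproduct of two functions between finite ordinals, acting blockwise. -/
def coprodMap {m₁ n₁ m₂ n₂ : ℕ} (f : Fin m₁ → Fin n₁) (g : Fin m₂ → Fin n₂) :
    Fin (m₁ + m₂) → Fin (n₁ + n₂) :=
  finSumFinEquiv ∘ Sum.map f g ∘ finSumFinEquiv.symm

/-- The similarity component `θ'_{k₁,…,kₙ}` of `θ : [m] → [n]`. -/
def simComp {m n : ℕ} (θ : Fin m → Fin n) (k : Fin n → ℕ) :
    Fin (∑ i, k (θ i)) → Fin (∑ j, k j) :=
  fun p => sigmaToFin ⟨θ (finToSigma p).1, (finToSigma p).2⟩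

/-- Cardinality of the fiber of `f` over `i`. -/
def fiberCard {m n : ℕ} (f : Fin m → Fin n) (i : Fin n) : ℕ :=
  (Finset.univ.filter fun x => f x = i).card

/-- A structure category: a wide subcategory of `FinOrd` closed under coproducts of
morphisms and under similarity components. -/
structure IsStructCat (Δ : ∀ m n : ℕ, Set (Fin m → Fin n)) : Prop where
  id_mem : ∀ n, id ∈ Δ n n
  comp_mem : ∀ {k m n : ℕ} (f : Fin k → Fin m) (g : Fin m → Fin n),
    f ∈ Δ k m → g ∈ Δ m n → g ∘ f ∈ Δ k n
  coprod_mem : ∀ {m₁ n₁ m₂ n₂ : ℕ} (f : Fin m₁ → Fin n₁) (g : Fin m₂ → Fin n₂),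
    f ∈ Δ m₁ n₁ → g ∈ Δ m₂ n₂ → coprodMap f g ∈ Δ (m₁ + m₂) (n₁ + n₂)
  sim_mem : ∀ {m n : ℕ} (θ : Fin m → Fin n), θ ∈ Δ m n → ∀ k : Fin n → ℕ,
    simComp θ k ∈ Δ (∑ i, k (θ i)) (∑ j, k j)

/-- A structure monoid: a subset of ℕ containing 1 and closed under `I`-indexed sums. -/
def IsStructMonoid (I : Set ℕ) : Prop :=
  1 ∈ I ∧ ∀ k ∈ I, ∀ a : Fin k → ℕ, (∀ i, a i ∈ I) → (∑ i, a i) ∈ I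

/-- `Δ^I` : functions all of whose fibers have cardinality in `I`. -/
def DeltaUp (I : Set ℕ) : ∀ m n : ℕ, Set (Fin m → Fin n) :=
  fun _ _ => {f | ∀ i, fiberCard f i ∈ I}

/-- The unique map `[n] → [1]`. -/
def bang (n : ℕ) : Fin n → Fin 1 := fun _ => 0

/-- `Δ_I` : the smallest structure category containing the maps `[n] → [1]` for `n ∈ I`. -/
def GenDelta (I : Set ℕ) : ∀ m n : ℕ, Set (Fin m → Fin n) := fun m n =>
  {f | ∀ Δ : ∀ m n : ℕ, Set (Fin m → Fin n), IsStructCat Δ →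
    (∀ k ∈ I, bang k ∈ Δ k 1) → f ∈ Δ m n}

lemma getElem_blocks {α : Type*} (n : ℕ) (k : Fin n → ℕ)
    (F : (i : Fin n) → Fin (k i) → α) (p : ℕ)
    (hp : p < (List.ofFn fun i => List.ofFn fun x => F i x).flatten.length) :
    ∃ (b : Fin n) (off : Fin (k b)),
      ((List.ofFn fun i => List.ofFn fun x => F i x).flatten)[p] = F b off ∧
      p = (∑ j ∈ Finset.univ.filter fun j => j < b, k j) + off.val := by
  induction n generalizing p with
  | zero => simp at hp
  | succ n ih =>
    simp only [List.ofFn_succ, List.flatten_cons] at hp ⊢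
    by_cases h : p < k 0
    · refine ⟨0, ⟨p, h⟩, ?_, ?_⟩
      · rw [List.getElem_append_left (by simpa using h), List.getElem_ofFn]
      · rw [show (Finset.univ.filter fun j => j < (0 : Fin (n+1))) = ∅ from by
          ext j; simp [Fin.not_lt_zero]]
        simp
    · have hlen : (List.ofFn fun x => F 0 x).length = k 0 := by simp
      rw [List.getElem_append_right (by omega)]
      simp only [List.length_ofFn] at hp ⊢
      have hp' : p - k 0 < (List.ofFn fun i => List.ofFn fun x => F i.succ x).flatten.length := by
        simp only [List.length_append] at hp; omega
      obtain ⟨b, off, h1, h2⟩ := ih (fun i => k i.succ) (fun i x => F i.succ x)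
        (p - k 0) hp'
      refine ⟨b.succ, off, h1, ?_⟩
      have hsum : (∑ j ∈ Finset.univ.filter fun j => j < b.succ, k j)
          = k 0 + ∑ j ∈ Finset.univ.filter fun j => j < b, k j.succ := by
        rw [Finset.sum_filter, Finset.sum_filter, Fin.sum_univ_succ]
        simp [Fin.succ_lt_succ_iff, Fin.succ_pos]
      omega

lemma sigmaToFin_finToSigma {n : ℕ} {k : Fin n → ℕ} (p : Fin (∑ i, k i)) :
    sigmaToFin (finToSigma p) = p := by
  unfold finToSigma
  obtain ⟨b, off, h1, h2⟩ := getElem_blocks n k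
    (fun i x => (⟨i, x⟩ : (i : Fin n) × Fin (k i))) p.val
    (by simpa [Function.comp_def, List.sum_ofFn] using p.isLt)
  rw [List.get_eq_getElem]
  simp only [Fin.coe_cast]
  rw [h1]
  exact Fin.ext h2.symm

lemma coprodMap_val {m₁ n₁ m₂ n₂ : ℕ} (f : Fin m₁ → Fin n₁) (g : Fin m₂ → Fin n₂)
    (x : Fin (m₁ + m₂)) :
    (coprodMap f g x).val =
      if h : x.val < m₁ then (f ⟨x.val, h⟩).val
      else n₁ + (g ⟨x.val - m₁, by omega⟩).val := by
  unfold coprodMap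
  by_cases h : x.val < m₁
  · have hx : finSumFinEquiv.symm x = Sum.inl ⟨x.val, h⟩ := by
      rw [Equiv.symm_apply_eq, finSumFinEquiv_apply_left]
      exact Fin.ext rfl
    simp [hx, h]
  · have hx : finSumFinEquiv.symm x = Sum.inr ⟨x.val - m₁, by omega⟩ := by
      rw [Equiv.symm_apply_eq, finSumFinEquiv_apply_right]
      exact Fin.ext (by simp; omega)
    simp [hx, h]

lemma card_filter_lt {n : ℕ} (b : Fin n) :
    (Finset.univ.filter fun j => j < b).card = b.val := by
  rw [show (Finset.univ.filter fun j => j < b) = Finset.Iio b from by ext j; simp]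
  exact Fin.card_Iio b

lemma mem_of_eq {Δ : ∀ m n : ℕ, Set (Fin m → Fin n)} {m m' n n' : ℕ}
    (hm : m = m') (hn : n = n') {f : Fin m → Fin n} (hf : f ∈ Δ m n) :
    (Fin.cast hn ∘ f ∘ Fin.cast hm.symm) ∈ Δ m' n' := by
  subst hm; subst hn
  simpa [Fin.cast_refl, Function.comp_def] using hf

lemma simComp_bang_val {m c : ℕ} (y : Fin (∑ i : Fin m, (fun _ : Fin 1 => c) (bang m i))) :
    ∃ b : ℕ, b < m ∧ y.val = b * c + (simComp (bang m) (fun _ => c) y).val ∧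
      (simComp (bang m) (fun _ => c) y).val < c := by
  have hy := sigmaToFin_finToSigma y
  set q := finToSigma y with hq
  have h2 : (simComp (bang m) (fun _ => c) y).val = q.2.val := by
    show (∑ j ∈ Finset.univ.filter fun j => j < (0 : Fin 1),
        (fun _ : Fin 1 => c) j) + q.2.val = q.2.val
    rw [Finset.sum_const, card_filter_lt]
    simp
  refine ⟨q.1.val, q.1.isLt, ?_, ?_⟩
  · have h1 : y.val = (∑ j ∈ Finset.univ.filter fun j => j < q.1,
        (fun _ : Fin m => c) j) + q.2.val := by
      rw [← hy]; rfl
    rw [h1, h2, Finset.sum_const, card_filter_lt]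
    simp [mul_comm]
  · rw [h2]
    exact q.2.isLt

section
variable {Δ : ∀ m n : ℕ, Set (Fin m → Fin n)} (hΔ : IsStructCat Δ)
  (hb : ∀ k : ℕ, bang k ∈ Δ k 1)

include hΔ hb

lemma empty_mem (j : ℕ) (f : Fin 0 → Fin j) : f ∈ Δ 0 j := by
  have hs := hΔ.sim_mem (bang 0) (hb 0) (fun _ : Fin 1 => j)
  have h0 : (∑ i : Fin 0, (fun _ : Fin 1 => j) (bang 0 i)) = 0 := by simp
  have h1 : (∑ _j : Fin 1, j) = j := by simp
  have hm := mem_of_eq h0 h1 hs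
  have : f = Fin.cast h1 ∘ simComp (bang 0) (fun _ => j) ∘ Fin.cast h0.symm :=
    funext fun x => x.elim0
  rw [this]; exact hm

lemma pt_mem (n : ℕ) (i : Fin n) : (fun _ : Fin 1 => i) ∈ Δ 1 n := by
  have e1 : (fun x : Fin 0 => x.elim0) ∈ Δ 0 i.val := empty_mem hΔ hb _ _
  have e2 : (fun x : Fin 0 => x.elim0) ∈ Δ 0 (n - 1 - i.val) := empty_mem hΔ hb _ _
  have hc := hΔ.coprod_mem _ _ (hΔ.coprod_mem _ _ e1 (hΔ.id_mem 1)) e2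
  have hn : i.val + 1 + (n - 1 - i.val) = n := by have := i.isLt; omega
  have hm : (0 + 1 + 0 : ℕ) = 1 := rfl
  have hmem := mem_of_eq hm hn hc
  have heq : (fun _ : Fin 1 => i) = Fin.cast hn ∘
      (coprodMap (coprodMap (fun x : Fin 0 => x.elim0) (id : Fin 1 → Fin 1))
        (fun x : Fin 0 => x.elim0)) ∘ Fin.cast hm.symm := by
    funext x
    apply Fin.ext
    show i.val = _
    simp only [Function.comp_apply, Fin.coe_cast]
    rw [coprodMap_val]
    have hx : ((Fin.cast hm.symm x : Fin (0 + 1 + 0))).val < 0 + 1 := by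
      have := (Fin.cast hm.symm x).isLt; omega
    rw [dif_pos hx, coprodMap_val, dif_neg (by omega)]
    simp
  rw [heq]; exact hmem

lemma all_mem : ∀ m n (f : Fin m → Fin n), f ∈ Δ m n := by
  intro m
  induction m with
  | zero => exact fun n f => empty_mem hΔ hb n f
  | succ m ih =>
    intro n f
    have hg : (f ∘ Fin.castSucc) ∈ Δ m n := ih n _
    have hp : (fun _ : Fin 1 => f (Fin.last m)) ∈ Δ 1 n := pt_mem hΔ hb n _
    have hc := hΔ.coprod_mem _ _ hg hp
    have hs := hΔ.sim_mem (bang 2) (hb 2) (fun _ : Fin 1 => n)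
    have hS : (∑ i : Fin 2, (fun _ : Fin 1 => n) (bang 2 i)) = n + n := by
      simp [two_mul]
    have hT : (∑ _j : Fin 1, n) = n := by simp
    have hfold := mem_of_eq hS hT hs
    have hcomp := hΔ.comp_mem _ _ hc hfold
    have heq : f = (Fin.cast hT ∘ simComp (bang 2) (fun _ => n) ∘ Fin.cast hS.symm) ∘
        coprodMap (f ∘ Fin.castSucc) (fun _ : Fin 1 => f (Fin.last m)) := by
      funext x
      apply Fin.ext
      obtain ⟨b, hb2, hy, hlt⟩ := simComp_bang_val
        (Fin.cast hS.symm (coprodMap (f ∘ Fin.castSucc) (fun _ : Fin 1 => f (Fin.last m)) x))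
      simp only [Function.comp_apply, Fin.coe_cast] at hy hlt ⊢
      rw [coprodMap_val] at hy
      by_cases hx : x.val < m
      · rw [dif_pos hx] at hy
        simp only [Function.comp_apply] at hy
        have hfx : f (Fin.castSucc ⟨x.val, hx⟩) = f x := rfl
        rw [hfx] at hy
        have hfxlt : (f x).val < n := (f x).isLt
        have hb01 : b = 0 ∨ b = 1 := by omega
        rcases hb01 with rfl | rfl <;> omega
      · rw [dif_neg hx] at hy
        have hxm : x = Fin.last m := by apply Fin.ext; rw [Fin.val_last]; have := x.isLt; omega
        have hfl : f x = f (Fin.last m) := by rw [hxm]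
        rw [hfl]
        have hflt : (f (Fin.last m)).val < n := (f (Fin.last m)).isLt
        have hb01 : b = 0 ∨ b = 1 := by omega
        rcases hb01 with rfl | rfl <;> omega
    rw [heq]; exact hcomp

end
/-- `Δ_ℕ`, generated by all maps `[n] → [1]`, contains the transposition of `[2]` and hence
equals the category of all functions; the transposition factors as the composite of a
similarity component of `!₂ : [2] → [1]` with the coproduct `!₀ + id_[2] + !₀ : [2] → [4]`. -/
theorem stmt_6 :
    ((![1, 0] : Fin 2 → Fin 2) ∈ GenDelta Set.univ 2 2) ∧
    (∀ m n : ℕ, GenDelta Set.univ m n = Set.univ) ∧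
    (∀ x : Fin (0 + 2 + 0),
      (simComp (bang 2) (fun _ => 2)
        (Fin.cast (by decide)
          (coprodMap (coprodMap (bang 0) (id : Fin 2 → Fin 2)) (bang 0) x))).val
        = ((![1, 0] : Fin 2 → Fin 2) x).val) := by
  have hall : ∀ (Δ : ∀ m n : ℕ, Set (Fin m → Fin n)), IsStructCat Δ →
      (∀ k ∈ (Set.univ : Set ℕ), bang k ∈ Δ k 1) →
      ∀ m n (f : Fin m → Fin n), f ∈ Δ m n :=
    fun Δ hΔ hb m n f => all_mem hΔ (fun k => hb k trivial) m n f
  refine ⟨fun Δ hΔ hb => hall Δ hΔ hb 2 2 _, fun m n => ?_, by decide⟩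
  exact Set.eq_univ_of_forall fun f Δ hΔ hb => hall Δ hΔ hb m n f
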